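/- Let H be a Hilbert space, D ⊆ H a dense subspace, T : D → H an essentially self-adjoint operator, and S : H → H a bounded operator with bounded inverse. Then the operator S* T S, defined on S⁻¹D, is essentially self-adjoint. -/

import Mathlib

open Complex

/-- A densely defined unbounded operator is *self-adjoint* if it coincides with
its adjoint. -/
def IsSelfAdjointPMap {H : Type*} [NormedAddCommGroup H] [InnerProductSpace ℂ H]
    [CompleteSpace H] (T : H →ₗ.[ℂ] H) : Prop :=
  T.adjoint = T

/-- A densely defined unbounded operator is *essentially self-adjoint* if its
closure is self-adjoint; equivalently, if its adjoint is self-adjoint. -/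
def IsEssentiallySelfAdjoint {H : Type*} [NormedAddCommGroup H]
    [InnerProductSpace ℂ H] [CompleteSpace H] (T : H →ₗ.[ℂ] H) : Prop :=
  IsSelfAdjointPMap T.adjoint

section Aux

variable {H : Type*} [NormedAddCommGroup H] [InnerProductSpace ℂ H] [CompleteSpace H]

/-- The adjoint of a conjugated operator is the conjugated adjoint. -/
lemma conj_adjoint_aux
    (A : H →ₗ.[ℂ] H) (hA : Dense (A.domain : Set H))
    (S : H →L[ℂ] H) (Sinv : H →L[ℂ] H)
    (hS₁ : S ∘L Sinv = ContinuousLinearMap.id ℂ H)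
    (hS₂ : Sinv ∘L S = ContinuousLinearMap.id ℂ H)
    (B : H →ₗ.[ℂ] H) (hB : Dense (B.domain : Set H))
    (hdom : ∀ u : H, u ∈ B.domain ↔ S u ∈ A.domain)
    (happ : ∀ (u : H) (hu : u ∈ B.domain) (hSu : S u ∈ A.domain),
      B ⟨u, hu⟩ = ContinuousLinearMap.adjoint S (A ⟨S u, hSu⟩)) :
    (∀ v : H, v ∈ B.adjoint.domain ↔ S v ∈ A.adjoint.domain) ∧
    (∀ (v : H) (hv : v ∈ B.adjoint.domain) (hSv : S v ∈ A.adjoint.domain),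
      B.adjoint ⟨v, hv⟩ = ContinuousLinearMap.adjoint S (A.adjoint ⟨S v, hSv⟩)) := by
  have hSinvS : ∀ x : H, Sinv (S x) = x := fun x => ContinuousLinearMap.ext_iff.mp hS₂ x
  have hSSinv : ∀ x : H, S (Sinv x) = x := fun x => ContinuousLinearMap.ext_iff.mp hS₁ x
  -- forward direction of domain
  have hfwd : ∀ (v : H) (hv : v ∈ B.adjoint.domain), S v ∈ A.adjoint.domain := by
    intro v hv
    apply LinearPMap.mem_adjoint_domain_of_exists
    refine ⟨ContinuousLinearMap.adjoint Sinv (B.adjoint ⟨v, hv⟩), fun x => ?_⟩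
    have hx : (Sinv (x : H)) ∈ B.domain := by
      rw [hdom, hSSinv]; exact x.2
    have hSu : S (Sinv (x : H)) ∈ A.domain := by rw [hSSinv]; exact x.2
    have h1 := (LinearPMap.adjoint_isFormalAdjoint hB) ⟨v, hv⟩ ⟨Sinv (x : H), hx⟩
    have h2 := happ (Sinv (x : H)) hx hSu
    have h3 : A ⟨S (Sinv (x : H)), hSu⟩ = A x := congrArg _ (Subtype.ext (hSSinv _))
    calc (inner ℂ (ContinuousLinearMap.adjoint Sinv (B.adjoint ⟨v, hv⟩)) (x : H) : ℂ)
        = inner ℂ (B.adjoint ⟨v, hv⟩) (Sinv (x : H)) :=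
          ContinuousLinearMap.adjoint_inner_left _ _ _
      _ = inner ℂ (v : H) (B ⟨Sinv (x : H), hx⟩) := h1
      _ = inner ℂ (v : H) (ContinuousLinearMap.adjoint S (A ⟨S (Sinv (x : H)), hSu⟩)) := by
          rw [h2]
      _ = inner ℂ (S v) (A ⟨S (Sinv (x : H)), hSu⟩) :=
          ContinuousLinearMap.adjoint_inner_right _ _ _
      _ = inner ℂ (S v) (A x) := by rw [h3]
  have key : ∀ (v : H) (hSv : S v ∈ A.adjoint.domain) (u : B.domain),
      (inner ℂ (ContinuousLinearMap.adjoint S (A.adjoint ⟨S v, hSv⟩)) (u : H) : ℂ)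
        = inner ℂ v (B u) := by
    intro v hSv u
    have hSu : S (u : H) ∈ A.domain := (hdom _).mp u.2
    have h1 := (LinearPMap.adjoint_isFormalAdjoint hA) ⟨S v, hSv⟩ ⟨S (u : H), hSu⟩
    have h2 : B u = ContinuousLinearMap.adjoint S (A ⟨S (u : H), hSu⟩) := happ (u : H) u.2 hSu
    calc (inner ℂ (ContinuousLinearMap.adjoint S (A.adjoint ⟨S v, hSv⟩)) (u : H) : ℂ)
        = inner ℂ (A.adjoint ⟨S v, hSv⟩) (S (u : H)) :=
          ContinuousLinearMap.adjoint_inner_left _ _ _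
      _ = inner ℂ (S v) (A ⟨S (u : H), hSu⟩) := h1
      _ = inner ℂ v (ContinuousLinearMap.adjoint S (A ⟨S (u : H), hSu⟩)) :=
          (ContinuousLinearMap.adjoint_inner_right _ _ _).symm
      _ = inner ℂ v (B u) := by rw [h2]
  have hbwd : ∀ (v : H), S v ∈ A.adjoint.domain → v ∈ B.adjoint.domain := by
    intro v hSv
    apply LinearPMap.mem_adjoint_domain_of_exists
    exact ⟨ContinuousLinearMap.adjoint S (A.adjoint ⟨S v, hSv⟩), fun u => key v hSv u⟩
  refine ⟨fun v => ⟨hfwd v, hbwd v⟩, fun v hv hSv => ?_⟩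
  exact LinearPMap.adjoint_apply_eq hB _ (fun u => key v hSv u)

end Aux

/-- If `T` is essentially self-adjoint on the dense domain `D` and
`S` is bounded with bounded inverse, then `S* T S`, defined on `S⁻¹ D`, is
essentially self-adjoint. -/
theorem essSelfAdjoint_of_conjugate {H : Type*} [NormedAddCommGroup H]
    [InnerProductSpace ℂ H] [CompleteSpace H]
    (T : H →ₗ.[ℂ] H) (hdense : Dense (T.domain : Set H))
    (hT : IsEssentiallySelfAdjoint T)
    (S : H →L[ℂ] H) (Sinv : H →L[ℂ] H)
    (hS₁ : S ∘L Sinv = ContinuousLinearMap.id ℂ H)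
    (hS₂ : Sinv ∘L S = ContinuousLinearMap.id ℂ H)
    (T' : H →ₗ.[ℂ] H)
    (hdom : ∀ u : H, u ∈ T'.domain ↔ S u ∈ T.domain)
    (happ : ∀ (u : H) (hu : u ∈ T'.domain) (hSu : S u ∈ T.domain),
      T' ⟨u, hu⟩ = ContinuousLinearMap.adjoint S (T ⟨S u, hSu⟩)) :
    IsEssentiallySelfAdjoint T' := by
  have hSinvS : ∀ x : H, Sinv (S x) = x := fun x => ContinuousLinearMap.ext_iff.mp hS₂ x
  have hSSinv : ∀ x : H, S (Sinv x) = x := fun x => ContinuousLinearMap.ext_iff.mp hS₁ x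
  -- S is a homeomorphism
  have hopen : IsOpenMap (S : H → H) :=
    (Homeomorph.mk ⟨(S : H → H), Sinv, hSinvS, hSSinv⟩ S.continuous Sinv.continuous).isOpenMap
  have hpre : ∀ (p : Submodule ℂ H) (q : Submodule ℂ H), Dense (p : Set H) →
      (∀ u : H, u ∈ q ↔ S u ∈ p) → Dense (q : Set H) := by
    intro p q hp hq
    have : (q : Set H) = (S : H → H) ⁻¹' (p : Set H) := by
      ext u; exact hq u
    rw [this]
    exact hp.preimage hopen
  have hT'dense : Dense (T'.domain : Set H) := hpre _ _ hdense hdom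
  obtain ⟨hdom1, happ1⟩ := conj_adjoint_aux T hdense S Sinv hS₁ hS₂ T' hT'dense hdom happ
  -- T.adjoint has dense domain since it is self-adjoint
  have hTsa : IsSelfAdjoint T.adjoint := hT
  have hTadense : Dense (T.adjoint.domain : Set H) := hTsa.dense_domain
  have hT'adense : Dense (T'.adjoint.domain : Set H) := hpre _ _ hTadense hdom1
  obtain ⟨hdom2, happ2⟩ :=
    conj_adjoint_aux T.adjoint hTadense S Sinv hS₁ hS₂ T'.adjoint hT'adense hdom1 happ1
  -- now show T'.adjoint.adjoint = T'.adjoint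
  have hTT : T.adjoint.adjoint = T.adjoint := hT
  apply LinearPMap.ext
  · ext v
    rw [hdom2 v, hdom1 v, hTT]
  · intro v hv hw
    have hSv : S v ∈ T.adjoint.adjoint.domain := (hdom2 v).mp hv
    have hSv' : S v ∈ T.adjoint.domain := by rw [← hTT]; exact hSv
    rw [happ2 v hv hSv, happ1 v hw hSv']
    congr 1
    obtain ⟨hd, hfun⟩ := LinearPMap.ext_iff.mp hTT
    exact @hfun (S v) hSv hSv'
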